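/- For any two distinct points p₁, p₂ in the unit bidisc Δ² ⊂ ℂ², there exists a holomorphic map f : Δ² → Δ² with f ∘ f = f, f(p₁) = p₁, f(p₂) = p₂, and f ≠ id. (Hence no two points form a determining set for holomorphic endomorphisms of Δ², i.e., ŝ₀(Δ²) > 2.) -/

import Mathlib

open Metric Set

/-- The Möbius automorphism of the unit disc sending `a` to `0`. -/
noncomputable def ma (a w : ℂ) : ℂ := (w - a) / (1 - (starRingEnd ℂ) a * w)

lemma den_ne {a w : ℂ} (ha : ‖a‖ < 1) (hw : ‖w‖ < 1) :
    1 - (starRingEnd ℂ) a * w ≠ 0 := by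
  intro h
  have h1 : (1 : ℂ) = (starRingEnd ℂ) a * w := by linear_combination h
  have h2 : ‖(starRingEnd ℂ) a * w‖ = 1 := by rw [← h1]; simp
  rw [norm_mul, Complex.norm_conj] at h2
  nlinarith [norm_nonneg a, norm_nonneg w]

lemma ma_lt_one {a w : ℂ} (ha : ‖a‖ < 1) (hw : ‖w‖ < 1) :
    ‖ma a w‖ < 1 := by
  rw [ma, norm_div, div_lt_one (norm_pos_iff.mpr (den_ne ha hw))]
  have key : Complex.normSq (w - a) < Complex.normSq (1 - (starRingEnd ℂ) a * w) := by
    have e : Complex.normSq (1 - (starRingEnd ℂ) a * w) - Complex.normSq (w - a)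
        = (1 - Complex.normSq a) * (1 - Complex.normSq w) := by
      simp only [Complex.normSq_apply, Complex.sub_re, Complex.sub_im, Complex.one_re,
        Complex.one_im, Complex.mul_re, Complex.mul_im, Complex.conj_re, Complex.conj_im]
      ring
    have ha2 : Complex.normSq a < 1 := by
      rw [← Complex.sq_norm]; nlinarith [norm_nonneg a]
    have hw2 : Complex.normSq w < 1 := by
      rw [← Complex.sq_norm]; nlinarith [norm_nonneg w]
    nlinarith
  rw [← Complex.sq_norm, ← Complex.sq_norm] at key
  exact lt_of_pow_lt_pow_left₀ 2 (norm_nonneg _) key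

lemma ma_self (a : ℂ) : ma a a = 0 := by simp [ma]

lemma ma_zero (a : ℂ) : ma a 0 = -a := by simp [ma]

lemma ma_eq_zero {a w : ℂ} (ha : ‖a‖ < 1) (hw : ‖w‖ < 1) :
    ma a w = 0 ↔ w = a := by
  rw [ma, div_eq_zero_iff, sub_eq_zero]
  simp [den_ne ha hw]

lemma ma_ma {a w : ℂ} (ha : ‖a‖ < 1) (hw : ‖w‖ < 1) :
    ma (-a) (ma a w) = w := by
  have h1 := den_ne ha hw
  have h2 : 1 - (starRingEnd ℂ) (-a) * ma a w ≠ 0 :=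
    den_ne (by simpa using ha) (ma_lt_one ha hw)
  rw [ma, div_eq_iff h2]
  rw [ma] at h2 ⊢
  have h1' : 1 - w * (starRingEnd ℂ) a ≠ 0 := by rwa [mul_comm]
  simp only [map_neg] at h2 ⊢
  field_simp at h2 ⊢
  ring_nf

lemma ma_diffAt {a w : ℂ} (h : 1 - (starRingEnd ℂ) a * w ≠ 0) :
    DifferentiableAt ℂ (ma a) w := by
  have : DifferentiableAt ℂ (fun w : ℂ => (w - a) / (1 - (starRingEnd ℂ) a * w)) w :=
    DifferentiableAt.div (by fun_prop) (by fun_prop) h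
  exact this.congr_of_eventuallyEq (by filter_upwards with x; rfl)

/-- The main construction in the case where the distance to the first
coordinate dominates: a retraction onto the graph of a slope-`λ` line,
conjugated by Möbius automorphisms. -/
lemma bidisc_helper (p₁ p₂ : ℂ × ℂ)
    (h₁ : p₁ ∈ ball (0 : ℂ) 1 ×ˢ ball (0 : ℂ) 1)
    (h₂ : p₂ ∈ ball (0 : ℂ) 1 ×ˢ ball (0 : ℂ) 1)
    (hca : p₂.1 ≠ p₁.1)
    (hle : ‖ma p₁.2 p₂.2‖ ≤ ‖ma p₁.1 p₂.1‖) :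
    ∃ f : ℂ × ℂ → ℂ × ℂ,
      DifferentiableOn ℂ f (ball (0 : ℂ) 1 ×ˢ ball (0 : ℂ) 1) ∧
      MapsTo f (ball (0 : ℂ) 1 ×ˢ ball (0 : ℂ) 1) (ball (0 : ℂ) 1 ×ˢ ball (0 : ℂ) 1) ∧
      (∀ z ∈ ball (0 : ℂ) 1 ×ˢ ball (0 : ℂ) 1, f (f z) = f z) ∧
      f p₁ = p₁ ∧ f p₂ = p₂ ∧
      (∃ z ∈ ball (0 : ℂ) 1 ×ˢ ball (0 : ℂ) 1, f z ≠ z) := by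
  obtain ⟨ha, hb⟩ : ‖p₁.1‖ < 1 ∧ ‖p₁.2‖ < 1 := by
    simpa [mem_prod, mem_ball_zero_iff] using h₁
  obtain ⟨hc, hd⟩ : ‖p₂.1‖ < 1 ∧ ‖p₂.2‖ < 1 := by
    simpa [mem_prod, mem_ball_zero_iff] using h₂
  set a := p₁.1; set b := p₁.2; set c := p₂.1; set d := p₂.2
  have hmac : ma a c ≠ 0 := fun h => hca ((ma_eq_zero ha hc).mp h)
  set lam : ℂ := ma b d / ma a c with hlam_def
  have hlam : ‖lam‖ ≤ 1 := by
    rw [hlam_def, norm_div, div_le_one (norm_pos_iff.mpr hmac)]; exact hle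
  have hbound : ∀ t : ℂ, ‖t‖ < 1 → ‖lam * ma a t‖ < 1 := by
    intro t ht
    calc ‖lam * ma a t‖ = ‖lam‖ * ‖ma a t‖ := norm_mul _ _
    _ ≤ 1 * ‖ma a t‖ :=
        mul_le_mul_of_nonneg_right hlam (norm_nonneg _)
    _ < 1 := by rw [one_mul]; exact ma_lt_one ha ht
  have hbneg : ‖-b‖ < 1 := by simpa using hb
  refine ⟨fun z => (z.1, ma (-b) (lam * ma a z.1)), ?_, ?_, ?_, ?_, ?_, ?_⟩
  · intro z hz
    have hz1 : ‖z.1‖ < 1 := by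
      simpa [mem_prod, mem_ball_zero_iff] using hz.1
    apply DifferentiableAt.differentiableWithinAt
    apply DifferentiableAt.prodMk differentiableAt_fst
    have d1 : DifferentiableAt ℂ (ma a) z.1 := ma_diffAt (den_ne ha hz1)
    have d2 : DifferentiableAt ℂ (ma (-b)) (lam * ma a z.1) :=
      ma_diffAt (den_ne hbneg (hbound _ hz1))
    exact d2.comp z ((d1.comp z differentiableAt_fst).const_mul lam)
  · intro z hz
    have hz1 : ‖z.1‖ < 1 := by
      simpa [mem_prod, mem_ball_zero_iff] using hz.1
    refine ⟨hz.1, ?_⟩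
    simp only [mem_ball_zero_iff]
    exact ma_lt_one hbneg (hbound _ hz1)
  · intro z _; rfl
  · have : ma (-b) (lam * ma a a) = b := by rw [ma_self, mul_zero, ma_zero, neg_neg]
    exact Prod.ext rfl this
  · have h1 : lam * ma a c = ma b d := div_mul_cancel₀ _ hmac
    have : ma (-b) (lam * ma a c) = d := by rw [h1]; exact ma_ma hb hd
    exact Prod.ext rfl this
  · refine ⟨(a, if b = 0 then (1/2 : ℂ) else 0), ?_, ?_⟩
    · constructor
      · simpa [mem_ball_zero_iff] using ha
      · simp only [mem_ball_zero_iff]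
        split <;> norm_num
    · simp only [ma_self, mul_zero, ma_zero, neg_neg, ne_eq, Prod.mk.injEq, not_and]
      intro _ h2
      by_cases hb0 : b = 0
      · rw [hb0, if_pos rfl] at h2
        norm_num at h2
      · rw [if_neg hb0] at h2
        exact hb0 h2

lemma bidisc_swap_mem {z : ℂ × ℂ} :
    z ∈ ball (0 : ℂ) 1 ×ˢ ball (0 : ℂ) 1 ↔
    ((z.2, z.1) : ℂ × ℂ) ∈ ball (0 : ℂ) 1 ×ˢ ball (0 : ℂ) 1 := by
  simp [mem_prod, and_comm]

/-- For any two distinct points of the unit bidisc there is a holomorphic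
retraction of the bidisc fixing both points which is not the identity; hence
no two points form a determining set for endomorphisms of `Δ²`. -/
theorem bidisc_two_points_not_determining (p₁ p₂ : ℂ × ℂ)
    (h₁ : p₁ ∈ ball (0 : ℂ) 1 ×ˢ ball (0 : ℂ) 1)
    (h₂ : p₂ ∈ ball (0 : ℂ) 1 ×ˢ ball (0 : ℂ) 1) (hne : p₁ ≠ p₂) :
    ∃ f : ℂ × ℂ → ℂ × ℂ,
      DifferentiableOn ℂ f (ball (0 : ℂ) 1 ×ˢ ball (0 : ℂ) 1) ∧
      MapsTo f (ball (0 : ℂ) 1 ×ˢ ball (0 : ℂ) 1) (ball (0 : ℂ) 1 ×ˢ ball (0 : ℂ) 1) ∧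
      (∀ z ∈ ball (0 : ℂ) 1 ×ˢ ball (0 : ℂ) 1, f (f z) = f z) ∧
      f p₁ = p₁ ∧ f p₂ = p₂ ∧
      (∃ z ∈ ball (0 : ℂ) 1 ×ˢ ball (0 : ℂ) 1, f z ≠ z) := by
  obtain ⟨ha, hb⟩ : ‖p₁.1‖ < 1 ∧ ‖p₁.2‖ < 1 := by
    simpa [mem_prod, mem_ball_zero_iff] using h₁
  obtain ⟨hc, hd⟩ : ‖p₂.1‖ < 1 ∧ ‖p₂.2‖ < 1 := by
    simpa [mem_prod, mem_ball_zero_iff] using h₂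
  rcases le_total (‖ma p₁.2 p₂.2‖) (‖ma p₁.1 p₂.1‖) with hle | hle
  · have hca : p₂.1 ≠ p₁.1 := by
      intro h
      apply hne
      have h0 : ma p₁.1 p₂.1 = 0 := (ma_eq_zero ha hc).mpr h
      rw [h0, norm_zero] at hle
      have h0' : ma p₁.2 p₂.2 = 0 :=
        norm_eq_zero.mp (le_antisymm hle (norm_nonneg _))
      have := (ma_eq_zero hb hd).mp h0'
      exact Prod.ext h.symm this.symm
    exact bidisc_helper p₁ p₂ h₁ h₂ hca hle
  · have hdb : p₂.2 ≠ p₁.2 := by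
      intro h
      apply hne
      have h0 : ma p₁.2 p₂.2 = 0 := (ma_eq_zero hb hd).mpr h
      rw [h0, norm_zero] at hle
      have h0' : ma p₁.1 p₂.1 = 0 :=
        norm_eq_zero.mp (le_antisymm hle (norm_nonneg _))
      have := (ma_eq_zero ha hc).mp h0'
      exact Prod.ext this.symm h.symm
    obtain ⟨f', hdiff, hmaps, hidem, hfix1, hfix2, z', hz', hnz⟩ :=
      bidisc_helper (p₁.2, p₁.1) (p₂.2, p₂.1) (bidisc_swap_mem.mp h₁)
        (bidisc_swap_mem.mp h₂) hdb hle
    refine ⟨fun z => ((f' (z.2, z.1)).2, (f' (z.2, z.1)).1), ?_, ?_, ?_, ?_, ?_, ?_⟩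
    · have h1 : DifferentiableOn ℂ (fun z : ℂ × ℂ => f' (z.2, z.1))
          (ball (0 : ℂ) 1 ×ˢ ball (0 : ℂ) 1) := by
        apply hdiff.comp (Differentiable.differentiableOn (by fun_prop))
        intro z hz
        exact bidisc_swap_mem.mp hz
      exact (differentiable_snd.comp_differentiableOn h1).prodMk
        (differentiable_fst.comp_differentiableOn h1)
    · intro z hz
      exact bidisc_swap_mem.mp (hmaps (bidisc_swap_mem.mp hz))
    · intro z hz
      have h1 := hidem _ (bidisc_swap_mem.mp hz)
      simp only [Prod.mk.eta]
      rw [h1]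
    · show ((f' (p₁.2, p₁.1)).2, (f' (p₁.2, p₁.1)).1) = p₁
      rw [hfix1]
    · show ((f' (p₂.2, p₂.1)).2, (f' (p₂.2, p₂.1)).1) = p₂
      rw [hfix2]
    · refine ⟨(z'.2, z'.1), bidisc_swap_mem.mpr (by simpa using hz'), ?_⟩
      simp only [Prod.mk.eta]
      intro h
      apply hnz
      have hA : (f' z').2 = z'.2 := congrArg Prod.fst h
      have hB : (f' z').1 = z'.1 := congrArg Prod.snd h
      exact Prod.ext hB hA
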